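/- In the imbalanced (m,3)-RPS, if in some strategy profile no player assigns positive probability to S, then R is strictly dominated by P for every player; consequently every such profile that is a Nash equilibrium must have all players playing P with probability 1, which is itself not a Nash equilibrium since deviating to S yields payoff m−1 > 0. -/
import Mathlib


/-- Objects: `0 = R`, `1 = P`, `2 = S`. The winning object for a profile of
choices in the imbalanced `(m,3)`-RPS: any multiset containing at least one `S`
and one `R` is a win for `R`; any multiset of only `R` and `P` is a win for `P`
(an all-`R` multiset is an all-way tie, won by `R`); any multiset of only `P`
and `S` is a win for `S`. -/
def imbWinner {m : ℕ} (c : Fin m → Fin 3) : Fin 3 :=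
  if (∃ i, c i = 0) ∧ (∃ i, c i = 2) then 0
  else if (∃ i, c i = 0) ∧ (∃ i, c i = 1) then 1
  else if (∃ i, c i = 0) then 0
  else if (∃ i, c i = 2) then 2
  else 1

/-- Payoff to player `j`: winners in an `m'`-way tie receive `(m - m')/m'`,
losers receive `-1`. -/
noncomputable def imbPayoff {m : ℕ} (c : Fin m → Fin 3) (j : Fin m) : ℝ :=
  let W : Finset (Fin m) := Finset.univ.filter (fun i => c i = imbWinner c)
  if c j = imbWinner c then ((m : ℝ) - W.card) / W.card else -1

/-- Expected payoff of player `j` when each player `i` uses mixed strategy `σ i`. -/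
noncomputable def imbExpPayoff {m : ℕ} (σ : Fin m → Fin 3 → ℝ) (j : Fin m) : ℝ :=
  ∑ c : Fin m → Fin 3, (∏ i, σ i (c i)) * imbPayoff c j

/-- `σ` is a profile of mixed strategies. -/
def IsMixedProfile {m : ℕ} (σ : Fin m → Fin 3 → ℝ) : Prop :=
  ∀ i, (∀ o, 0 ≤ σ i o) ∧ ∑ o, σ i o = 1

/-- `σ` is a Nash equilibrium: no unilateral deviation increases a player's
expected payoff. -/
noncomputable def IsNashEq {m : ℕ} (σ : Fin m → Fin 3 → ℝ) : Prop :=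
  IsMixedProfile σ ∧
    ∀ j (τ : Fin 3 → ℝ), (∀ o, 0 ≤ τ o) → (∑ o, τ o = 1) →
      imbExpPayoff (Function.update σ j τ) j ≤ imbExpPayoff σ j

/-- The pure strategy playing object `o` with probability `1`. -/
def pure3 (o : Fin 3) : Fin 3 → ℝ := fun o' => if o' = o then 1 else 0

/-- If no player ever plays `S` (object `2`): Rock is strictly dominated by
Paper for every player; any Nash equilibrium among such profiles has every
player playing pure Paper; the all-Paper profile is not a Nash equilibrium,
since deviating to Scissors yields payoff `m - 1 > 0`. -/
lemma fin3_tri (x : Fin 3) : x = 0 ∨ x = 1 ∨ x = 2 := by fin_cases x <;> simp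

lemma prod_update_apply {m : ℕ} (σ : Fin m → Fin 3 → ℝ) (j : Fin m) (τ : Fin 3 → ℝ)
    (c : Fin m → Fin 3) :
    (∏ i, Function.update σ j τ i (c i)) =
      τ (c j) * ∏ i ∈ Finset.univ.erase j, σ i (c i) := by
  rw [← Finset.mul_prod_erase Finset.univ _ (Finset.mem_univ j)]
  congr 1
  · simp
  · exact Finset.prod_congr rfl fun i hi => by
      rw [Function.update_of_ne (Finset.ne_of_mem_erase hi)]

/-- pure profiles give the pure payoff -/
lemma expPayoff_pure {m : ℕ} (o : Fin m → Fin 3) (j : Fin m) :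
    imbExpPayoff (fun i => pure3 (o i)) j = imbPayoff o j := by
  unfold imbExpPayoff
  rw [Finset.sum_eq_single o]
  · simp [pure3]
  · intro c _ hc
    obtain ⟨i, hi⟩ := Function.ne_iff.mp hc
    rw [Finset.prod_eq_zero (Finset.mem_univ i) (by simp [pure3, hi]), zero_mul]
  · simp

/-- multilinearity in player j's strategy -/
lemma expPayoff_update {m : ℕ} (σ : Fin m → Fin 3 → ℝ) (j : Fin m) (τ : Fin 3 → ℝ) :
    imbExpPayoff (Function.update σ j τ) j =
      ∑ o, τ o * imbExpPayoff (Function.update σ j (pure3 o)) j := by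
  unfold imbExpPayoff
  simp_rw [Finset.mul_sum, prod_update_apply]
  rw [Finset.sum_comm]
  refine Finset.sum_congr rfl fun c _ => ?_
  rw [Finset.sum_eq_single (c j)]
  · simp [pure3]; ring
  · intro o _ ho; simp [pure3, Ne.symm ho]
  · simp

/-- key payoff step: with no scissors and c j = R, switching j to P gains ≥ 1 -/
lemma payoff_step {m : ℕ} (hm : 2 ≤ m) (j : Fin m) (c : Fin m → Fin 3)
    (hc : c j = 0) (h2 : ∀ i, c i ≠ 2) :
    imbPayoff c j + 1 ≤ imbPayoff (Function.update c j 1) j := by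
  set c' := Function.update c j 1 with hc'def
  have hj' : c' j = 1 := Function.update_self _ _ _
  have h2' : ∀ i, c' i ≠ 2 := by
    intro i
    by_cases h : i = j
    · subst h; rw [hj']; decide
    · rw [hc'def, Function.update_of_ne h]; exact h2 i
  have hne2 : ¬ ∃ i, c i = 2 := fun ⟨i, hi⟩ => h2 i hi
  have hne2' : ¬ ∃ i, c' i = 2 := fun ⟨i, hi⟩ => h2' i hi
  have hw' : imbWinner c' = 1 := by
    unfold imbWinner
    rw [if_neg (fun h => hne2' h.2)]
    by_cases h0 : ∃ i, c' i = 0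
    · rw [if_pos ⟨h0, ⟨j, hj'⟩⟩]
    · rw [if_neg (fun h => h0 h.1), if_neg h0, if_neg hne2']
  have hm1 : (1:ℝ) ≤ (m:ℝ) := by exact_mod_cast Nat.one_le_of_lt hm
  by_cases h1 : ∃ i, c i = 1
  · have hw : imbWinner c = 1 := by
      unfold imbWinner
      rw [if_neg (fun h => hne2 h.2), if_pos ⟨⟨j, hc⟩, h1⟩]
    have hp : imbPayoff c j = -1 := by
      unfold imbPayoff
      rw [if_neg (by rw [hw, hc]; decide)]
    have hp' : 0 ≤ imbPayoff c' j := by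
      unfold imbPayoff
      rw [if_pos (by rw [hw', hj'])]
      have hjmem : j ∈ Finset.univ.filter (fun i => c' i = imbWinner c') := by
        simp [hj', hw']
      have hpos : 0 < (Finset.univ.filter (fun i => c' i = imbWinner c')).card :=
        Finset.card_pos.mpr ⟨j, hjmem⟩
      have hle : (Finset.univ.filter (fun i => c' i = imbWinner c')).card ≤ m := by
        simpa using Finset.card_filter_le Finset.univ (fun i => c' i = imbWinner c')
      apply div_nonneg
      · have : ((Finset.univ.filter (fun i => c' i = imbWinner c')).card : ℝ) ≤ m := by
          exact_mod_cast hle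
        linarith
      · exact_mod_cast hpos.le
    rw [hp]; linarith
  · have hall : ∀ i, c i = 0 := by
      intro i
      rcases fin3_tri (c i) with h | h | h
      · exact h
      · exact absurd ⟨i, h⟩ h1
      · exact absurd h (h2 i)
    have hw : imbWinner c = 0 := by
      unfold imbWinner
      rw [if_neg (fun h => hne2 h.2), if_neg (fun h => h1 h.2), if_pos ⟨j, hc⟩]
    have hfilter : Finset.univ.filter (fun i => c i = imbWinner c) = Finset.univ := by
      rw [hw]; ext i; simp [hall i]
    have hp : imbPayoff c j = 0 := by
      unfold imbPayoff
      rw [if_pos (by rw [hw, hc]), hfilter]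
      simp
    have hfilter' : Finset.univ.filter (fun i => c' i = imbWinner c') = {j} := by
      rw [hw']; ext i
      simp only [Finset.mem_filter, Finset.mem_univ, true_and, Finset.mem_singleton]
      constructor
      · intro h
        by_contra hij
        rw [hc'def, Function.update_of_ne hij, hall i] at h
        exact absurd h (by decide)
      · intro h; subst h; exact hj'
    have hp' : imbPayoff c' j = (m:ℝ) - 1 := by
      unfold imbPayoff
      rw [if_pos (by rw [hw', hj']), hfilter']
      simp
    rw [hp, hp']
    have : (2:ℝ) ≤ (m:ℝ) := by exact_mod_cast hm
    linarith

def flip01 : Fin 3 → Fin 3 := ![1, 0, 2]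

lemma flip01_invol (x : Fin 3) : flip01 (flip01 x) = x := by fin_cases x <;> rfl

def flipAt {m : ℕ} (j : Fin m) : (Fin m → Fin 3) ≃ (Fin m → Fin 3) where
  toFun c := Function.update c j (flip01 (c j))
  invFun c := Function.update c j (flip01 (c j))
  left_inv c := by
    funext i
    by_cases h : i = j
    · subst h; simp [flip01_invol]
    · simp [Function.update_of_ne h]
  right_inv c := by
    funext i
    by_cases h : i = j
    · subst h; simp [flip01_invol]
    · simp [Function.update_of_ne h]

/-- key inequality: paper dominates rock by at least 1 -/
lemma key_dom {m : ℕ} (hm : 2 ≤ m) (σ : Fin m → Fin 3 → ℝ)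
    (hprof : IsMixedProfile σ) (hnoS : ∀ i : Fin m, σ i 2 = 0) (j : Fin m) :
    imbExpPayoff (Function.update σ j (pure3 0)) j + 1 ≤
      imbExpPayoff (Function.update σ j (pure3 1)) j := by
  have hE1 : imbExpPayoff (Function.update σ j (pure3 1)) j =
      ∑ c : Fin m → Fin 3,
        (pure3 1 (flip01 (c j)) * ∏ i ∈ Finset.univ.erase j, σ i (c i)) *
          imbPayoff (Function.update c j (flip01 (c j))) j := by
    unfold imbExpPayoff
    rw [← Equiv.sum_comp (flipAt j)
      (fun c => (∏ i, Function.update σ j (pure3 1) i (c i)) * imbPayoff c j)]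
    refine Finset.sum_congr rfl fun c _ => ?_
    simp only [flipAt, Equiv.coe_fn_mk]
    rw [prod_update_apply]
    have h1 : Function.update c j (flip01 (c j)) j = flip01 (c j) :=
      Function.update_self _ _ _
    have h2 : ∏ i ∈ Finset.univ.erase j, σ i (Function.update c j (flip01 (c j)) i) =
        ∏ i ∈ Finset.univ.erase j, σ i (c i) :=
      Finset.prod_congr rfl fun i hi => by
        rw [Function.update_of_ne (Finset.ne_of_mem_erase hi)]
    rw [h1, h2]
  have hE0 : imbExpPayoff (Function.update σ j (pure3 0)) j =
      ∑ c : Fin m → Fin 3,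
        (pure3 0 (c j) * ∏ i ∈ Finset.univ.erase j, σ i (c i)) * imbPayoff c j := by
    unfold imbExpPayoff
    exact Finset.sum_congr rfl fun c _ => by rw [prod_update_apply]
  have hG : ∑ c : Fin m → Fin 3,
      pure3 0 (c j) * ∏ i ∈ Finset.univ.erase j, σ i (c i) = 1 := by
    have h1 : ∀ c : Fin m → Fin 3,
        pure3 0 (c j) * ∏ i ∈ Finset.univ.erase j, σ i (c i) =
          ∏ i, Function.update σ j (pure3 0) i (c i) :=
      fun c => (prod_update_apply σ j (pure3 0) c).symm
    simp_rw [h1]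
    rw [← Fintype.piFinset_univ, ← Finset.prod_univ_sum]
    rw [Finset.prod_eq_one]
    intro i _
    by_cases h : i = j
    · subst h; simp [pure3, Fin.sum_univ_three]
    · rw [Function.update_of_ne h]; exact (hprof i).2
  rw [hE0, hE1, ← hG, ← Finset.sum_add_distrib]
  refine Finset.sum_le_sum fun c _ => ?_
  set w := ∏ i ∈ Finset.univ.erase j, σ i (c i) with hw
  have hwnn : 0 ≤ w := Finset.prod_nonneg fun i _ => (hprof i).1 _
  by_cases hcj : c j = 0
  · have hpure0 : pure3 0 (c j) = 1 := by rw [hcj]; rfl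
    have hpure1 : pure3 1 (flip01 (c j)) = 1 := by rw [hcj]; rfl
    simp only [hpure0, hpure1, one_mul]
    by_cases hz : w = 0
    · rw [hz]; simp
    · have hwpos : 0 < w := lt_of_le_of_ne hwnn (Ne.symm hz)
      have h2 : ∀ i, c i ≠ 2 := by
        intro i hi
        by_cases h : i = j
        · subst h; rw [hcj] at hi; exact absurd hi (by decide)
        · exact hz (Finset.prod_eq_zero (Finset.mem_erase.mpr ⟨h, Finset.mem_univ i⟩)
            (by rw [hi]; exact hnoS i))
      have hstep := payoff_step hm j c hcj h2
      have : flip01 (c j) = 1 := by rw [hcj]; rfl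
      rw [this]
      nlinarith
  · have hpure0 : pure3 0 (c j) = 0 := by simp [pure3, hcj]
    have hpure1 : pure3 1 (flip01 (c j)) = 0 := by
      rcases fin3_tri (c j) with h | h | h
      · exact absurd h hcj
      · rw [h]; rfl
      · rw [h]; rfl
    rw [hpure0, hpure1]; ring_nf; simp

lemma pure3_nonneg (o : Fin 3) : ∀ o', 0 ≤ pure3 o o' := by
  intro o'; unfold pure3; split <;> norm_num

lemma pure3_sum (o : Fin 3) : ∑ o', pure3 o o' = 1 := by
  fin_cases o <;> simp [pure3, Fin.sum_univ_three]

lemma allP_payoff {m : ℕ} (j : Fin m) :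
    imbExpPayoff (fun _ : Fin m => pure3 1) j = 0 := by
  have h : (fun _ : Fin m => pure3 1) = fun i => pure3 ((fun _ : Fin m => (1 : Fin 3)) i) := rfl
  rw [h, expPayoff_pure]
  have hw : imbWinner (fun _ : Fin m => (1 : Fin 3)) = 1 := by
    unfold imbWinner
    rw [if_neg (by rintro ⟨⟨i, hi⟩, -⟩; simp at hi),
        if_neg (by rintro ⟨⟨i, hi⟩, -⟩; simp at hi),
        if_neg (by rintro ⟨i, hi⟩; simp at hi),
        if_neg (by rintro ⟨i, hi⟩; simp at hi)]
  unfold imbPayoff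
  rw [if_pos (by rw [hw])]
  rw [hw]
  simp

lemma devS_payoff {m : ℕ} (j : Fin m) :
    imbExpPayoff (Function.update (fun _ : Fin m => pure3 1) j (pure3 2)) j
      = (m : ℝ) - 1 := by
  have h : Function.update (fun _ : Fin m => pure3 1) j (pure3 2) =
      fun i => pure3 (Function.update (fun _ : Fin m => (1 : Fin 3)) j 2 i) := by
    funext i
    by_cases hij : i = j
    · subst hij; simp
    · simp [Function.update_of_ne hij]
  rw [h, expPayoff_pure]
  set c : Fin m → Fin 3 := Function.update (fun _ : Fin m => (1 : Fin 3)) j 2 with hcdef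
  have hcj : c j = 2 := Function.update_self _ _ _
  have hno0 : ¬ ∃ i, c i = 0 := by
    rintro ⟨i, hi⟩
    by_cases hij : i = j
    · subst hij; rw [hcj] at hi; exact absurd hi (by decide)
    · rw [hcdef, Function.update_of_ne hij] at hi; exact absurd hi (by decide)
  have hw : imbWinner c = 2 := by
    unfold imbWinner
    rw [if_neg (fun hh => hno0 hh.1), if_neg (fun hh => hno0 hh.1), if_neg hno0,
        if_pos ⟨j, hcj⟩]
  have hfilter : Finset.univ.filter (fun i => c i = imbWinner c) = {j} := by
    rw [hw]; ext i
    simp only [Finset.mem_filter, Finset.mem_univ, true_and, Finset.mem_singleton]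
    constructor
    · intro hi
      by_contra hij
      rw [hcdef, Function.update_of_ne hij] at hi
      exact absurd hi (by decide)
    · intro hi; subst hi; exact hcj
  unfold imbPayoff
  rw [if_pos (by rw [hw, hcj]), hfilter]
  simp

theorem stmt_16 (m : ℕ) (hm : 2 ≤ m) (σ : Fin m → Fin 3 → ℝ)
    (hprof : IsMixedProfile σ) (hnoS : ∀ i : Fin m, σ i 2 = 0) :
    (∀ j : Fin m,
      imbExpPayoff (Function.update σ j (pure3 0)) j <
        imbExpPayoff (Function.update σ j (pure3 1)) j) ∧
    (IsNashEq σ → ∀ i : Fin m, σ i 1 = 1) ∧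
    ¬ IsNashEq (fun _ : Fin m => pure3 1) ∧
    (∀ j : Fin m,
      imbExpPayoff (Function.update (fun _ : Fin m => pure3 1) j (pure3 2)) j
        = (m : ℝ) - 1 ∧ (0 : ℝ) < (m : ℝ) - 1) := by
  have hm2 : (2 : ℝ) ≤ (m : ℝ) := by exact_mod_cast hm
  refine ⟨?_, ?_, ?_, ?_⟩
  · intro j
    have := key_dom hm σ hprof hnoS j
    linarith
  · intro hne i
    have hdom := key_dom hm σ hprof hnoS i
    have hexp : imbExpPayoff σ i =
        ∑ o, σ i o * imbExpPayoff (Function.update σ i (pure3 o)) i := by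
      conv_lhs => rw [← Function.update_eq_self i σ]
      exact expPayoff_update σ i (σ i)
    have hnash := hne.2 i (pure3 1) (pure3_nonneg 1) (pure3_sum 1)
    rw [hexp, Fin.sum_univ_three, hnoS i, zero_mul, add_zero] at hnash
    have hsum := (hprof i).2
    rw [Fin.sum_univ_three, hnoS i, add_zero] at hsum
    have h0nn := (hprof i).1 0
    have hy : σ i 1 = 1 - σ i 0 := by linarith
    rw [hy] at hnash
    have h0le : σ i 0 ≤ 0 := by nlinarith [mul_le_mul_of_nonneg_left hdom h0nn]
    have h00 : σ i 0 = 0 := le_antisymm h0le h0nn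
    linarith
  · intro hne
    have hj : 0 < m := by omega
    set j : Fin m := ⟨0, hj⟩
    have hnash := hne.2 j (pure3 2) (pure3_nonneg 2) (pure3_sum 2)
    rw [devS_payoff j, allP_payoff j] at hnash
    linarith
  · intro j
    exact ⟨devS_payoff j, by linarith⟩
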